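/- Define EQ : {0,1}ⁿ × {0,1}ⁿ → {0,1} by EQ(X,Y) = 1 iff X = Y. The 2n+1 anchors a₀ = (1/2)·𝟙 (positive), and for each i ∈ {1,…,n}, a_{2i-1} = a₀ + (1/2)(eᵢ, -eᵢ) and a_{2i} = a₀ - (1/2)(eᵢ, -eᵢ) (negative), form an NN representation of EQ in ℝ^{2n}: if X = Y then a₀ is strictly closest to (X,Y), and if X ≠ Y then some negative anchor is strictly closer than a₀. -/

import Mathlib

lemma sum_eq_add_two {α : Type*} [Fintype α] [DecidableEq α] (f g : α → ℝ) (a b : α)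
    (hab : a ≠ b) (h : ∀ j, j ≠ a → j ≠ b → f j = g j) :
    ∑ j, f j = ∑ j, g j + ((f a - g a) + (f b - g b)) := by
  have h1 : ∑ j, (f j - g j) = ∑ j ∈ ({a, b} : Finset α), (f j - g j) := by
    refine (Finset.sum_subset (Finset.subset_univ _) ?_).symm
    intro j _ hj
    simp only [Finset.mem_insert, Finset.mem_singleton, not_or] at hj
    rw [h j hj.1 hj.2]; ring
  rw [Finset.sum_sub_distrib, Finset.sum_pair hab] at h1
  linarith

/-- The `2n+1` anchors `a₀ = ½𝟙`, `a₀ ± ½(eᵢ,-eᵢ)` form an NN representation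
of the `2n`-input EQUALITY function. -/
theorem stmt_5 (n : ℕ)
    (a₀ : EuclideanSpace ℝ (Fin n ⊕ Fin n)) (ha₀ : ∀ j, a₀ j = 1 / 2)
    (aP aM : Fin n → EuclideanSpace ℝ (Fin n ⊕ Fin n))
    (haP : ∀ i j, aP i j =
      1 / 2 + (1 / 2) * Sum.elim (fun k => if k = i then (1 : ℝ) else 0)
        (fun k => if k = i then (-1 : ℝ) else 0) j)
    (haM : ∀ i j, aM i j =
      1 / 2 - (1 / 2) * Sum.elim (fun k => if k = i then (1 : ℝ) else 0)
        (fun k => if k = i then (-1 : ℝ) else 0) j) :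
    ∀ X Y : Fin n → ℝ, (∀ i, X i = 0 ∨ X i = 1) → (∀ i, Y i = 0 ∨ Y i = 1) →
      ∀ Z : EuclideanSpace ℝ (Fin n ⊕ Fin n), Z = Sum.elim X Y →
        ((X = Y → ∀ i, dist Z a₀ < dist Z (aP i) ∧ dist Z a₀ < dist Z (aM i)) ∧
         (X ≠ Y → ∃ i, dist Z (aP i) < dist Z a₀ ∨ dist Z (aM i) < dist Z a₀)) := by
  intro X Y hX hY Z hZ
  have hdist : ∀ a b : EuclideanSpace ℝ (Fin n ⊕ Fin n),
      (∑ j, (Z j - a j) ^ 2) < (∑ j, (Z j - b j) ^ 2) → dist Z a < dist Z b := by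
    intro a b h
    rw [EuclideanSpace.dist_eq, EuclideanSpace.dist_eq]
    apply Real.sqrt_lt_sqrt (Finset.sum_nonneg fun _ _ => sq_nonneg _)
    simpa only [Real.dist_eq, sq_abs] using h
  have hZl : ∀ i, Z (Sum.inl i) = X i := by intro i; rw [hZ]; rfl
  have hZr : ∀ i, Z (Sum.inr i) = Y i := by intro i; rw [hZ]; rfl
  have hP0 : ∀ i j, j ≠ Sum.inl i → j ≠ Sum.inr i → aP i j = a₀ j := by
    intro i j hj1 hj2
    rw [haP, ha₀]
    rcases j with k | k
    · have : k ≠ i := fun h => hj1 (by rw [h])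
      simp [this]
    · have : k ≠ i := fun h => hj2 (by rw [h])
      simp [this]
  have hM0 : ∀ i j, j ≠ Sum.inl i → j ≠ Sum.inr i → aM i j = a₀ j := by
    intro i j hj1 hj2
    rw [haM, ha₀]
    rcases j with k | k
    · have : k ≠ i := fun h => hj1 (by rw [h])
      simp [this]
    · have : k ≠ i := fun h => hj2 (by rw [h])
      simp [this]
  have hne : ∀ i : Fin n, (Sum.inl i : Fin n ⊕ Fin n) ≠ Sum.inr i := fun i h => by
    cases h
  have p1 : ∀ i, aP i (Sum.inl i) = 1 := by intro i; rw [haP]; norm_num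
  have p2 : ∀ i, aP i (Sum.inr i) = 0 := by intro i; rw [haP]; norm_num
  have m1 : ∀ i, aM i (Sum.inl i) = 0 := by intro i; rw [haM]; norm_num
  have m2 : ∀ i, aM i (Sum.inr i) = 1 := by intro i; rw [haM]; norm_num
  have keyP : ∀ i, (∑ j, (Z j - a₀ j) ^ 2) =
      (∑ j, (Z j - aP i j) ^ 2) +
      (((X i - 1/2)^2 - (X i - 1)^2) + ((Y i - 1/2)^2 - (Y i - 0)^2)) := by
    intro i
    have h := sum_eq_add_two (fun j => (Z j - a₀ j) ^ 2) (fun j => (Z j - aP i j) ^ 2)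
      (Sum.inl i) (Sum.inr i) (hne i)
      (fun j hj1 hj2 => by simp only [hP0 i j hj1 hj2])
    beta_reduce at h
    rw [hZl, hZr, ha₀ (Sum.inl i), ha₀ (Sum.inr i), p1, p2] at h
    rw [h]
  have keyM : ∀ i, (∑ j, (Z j - a₀ j) ^ 2) =
      (∑ j, (Z j - aM i j) ^ 2) +
      (((X i - 1/2)^2 - (X i - 0)^2) + ((Y i - 1/2)^2 - (Y i - 1)^2)) := by
    intro i
    have h := sum_eq_add_two (fun j => (Z j - a₀ j) ^ 2) (fun j => (Z j - aM i j) ^ 2)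
      (Sum.inl i) (Sum.inr i) (hne i)
      (fun j hj1 hj2 => by simp only [hM0 i j hj1 hj2])
    beta_reduce at h
    rw [hZl, hZr, ha₀ (Sum.inl i), ha₀ (Sum.inr i), m1, m2] at h
    rw [h]
  constructor
  · intro hXY i
    have hxy : X i = Y i := by rw [hXY]
    constructor
    · apply hdist
      have h := keyP i
      rw [← hxy] at h
      rcases hX i with hx | hx <;> rw [hx] at h <;> nlinarith [h]
    · apply hdist
      have h := keyM i
      rw [← hxy] at h
      rcases hX i with hx | hx <;> rw [hx] at h <;> nlinarith [h]
  · intro hXY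
    obtain ⟨i, hi⟩ := Function.ne_iff.mp hXY
    refine ⟨i, ?_⟩
    rcases hX i with hx | hx <;> rcases hY i with hy | hy
    · exact absurd (hx.trans hy.symm) hi
    · right
      apply hdist
      have h := keyM i
      rw [hx, hy] at h
      nlinarith [h]
    · left
      apply hdist
      have h := keyP i
      rw [hx, hy] at h
      nlinarith [h]
    · exact absurd (hx.trans hy.symm) hi
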